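/- Nonconvex setting, square-integrable velocity: Let f : ℝⁿ → ℝ∪{+∞} be proper, convex, lsc, g : ℝⁿ → ℝ differentiable with β-Lipschitz gradient (β ≥ 0), suppose f+g is bounded below and η > 0 satisfies ηβ(3 + ηβ) < 1. Let x ∈ C¹([0,∞), ℝⁿ) be the unique global solution of ẋ(t) + x(t) = prox_{ηf}(x(t) − η∇g(x(t))), x(0) = x₀. Then ẋ ∈ L²([0,∞); ℝⁿ), lim_{t→∞} ẋ(t) = 0, and lim_{t→∞} (f+g)(ẋ(t)+x(t)) exists in ℝ. -/

import Mathlib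

open Filter MeasureTheory Set Topology intervalIntegral
open scoped RealInnerProductSpace

private lemma quad_aux {a b c : ℝ} (ha : 0 ≤ a) (hb : 0 ≤ b) (hc : 0 ≤ c)
    (h : a^2 ≤ (1+c)*a*b + c*b^2) : a ≤ (2+c)*b := by
  by_contra hcon
  push_neg at hcon
  have hcb : 0 ≤ (2+c)*b := by positivity
  have ha' : 0 < a := lt_of_le_of_lt hcb hcon
  have h1 : a*((2+c)*b) < a*a := mul_lt_mul_of_pos_left hcon ha'
  have h2 : (2+c)*b*b ≤ a*b := mul_le_mul_of_nonneg_right hcon.le hb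
  nlinarith [mul_nonneg hc (mul_nonneg hb hb), sq_nonneg b]

private lemma descent_aux {n : ℕ} (g : EuclideanSpace ℝ (Fin n) → ℝ)
    (g' : EuclideanSpace ℝ (Fin n) → EuclideanSpace ℝ (Fin n))
    (hg : ∀ z, HasGradientAt g (g' z) z) (β : ℝ) (hβ : 0 ≤ β)
    (hlip : ∀ a b, ‖g' a - g' b‖ ≤ β * ‖a - b‖) (a b : EuclideanSpace ℝ (Fin n)) :
    g b - g a ≤ ⟪g' b, b - a⟫ + β * ‖b - a‖^2 := by
  have hg'cont : Continuous g' := by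
    have : LipschitzWith (Real.toNNReal β) g' := by
      refine LipschitzWith.of_dist_le_mul fun p q => ?_
      rw [dist_eq_norm, dist_eq_norm]
      calc ‖g' p - g' q‖ ≤ β * ‖p - q‖ := hlip p q
        _ ≤ (Real.toNNReal β) * ‖p - q‖ := by
            gcongr; exact (Real.le_coe_toNNReal β)
    exact this.continuous
  set ℓ : ℝ → EuclideanSpace ℝ (Fin n) := fun θ => a + θ • (b - a) with hℓ
  have hℓcont : Continuous ℓ := by continuity
  have hderiv : ∀ θ : ℝ, HasDerivAt (fun θ => g (ℓ θ)) ⟪g' (ℓ θ), b - a⟫ θ := by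
    intro θ
    have h1 : HasDerivAt ℓ (b - a) θ := by
      have h0 := ((hasDerivAt_id' θ).smul_const (b - a)).const_add a
      rw [one_smul] at h0
      exact h0
    have h2 := (hg (ℓ θ)).hasFDerivAt.comp_hasDerivAt θ h1
    simp [InnerProductSpace.toDual_apply_apply] at h2
    exact h2
  have hcont : Continuous fun θ : ℝ => ⟪g' (ℓ θ), b - a⟫ :=
    (hg'cont.comp hℓcont).inner continuous_const
  have hFTC : ∫ θ in (0:ℝ)..1, ⟪g' (ℓ θ), b - a⟫ = g (ℓ 1) - g (ℓ 0) :=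
    integral_eq_sub_of_hasDerivAt (fun θ _ => hderiv θ) (hcont.intervalIntegrable 0 1)
  have hl1 : ℓ 1 = b := by simp [hℓ]
  have hl0 : ℓ 0 = a := by simp [hℓ]
  rw [hl1, hl0] at hFTC
  rw [← hFTC]
  have hmono : ∫ θ in (0:ℝ)..1, ⟪g' (ℓ θ), b - a⟫ ≤
      ∫ _θ in (0:ℝ)..1, (⟪g' b, b - a⟫ + β * ‖b - a‖^2) := by
    refine integral_mono_on zero_le_one (hcont.intervalIntegrable 0 1)
      (continuous_const.intervalIntegrable 0 1) (fun θ hθ => ?_)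
    have e1 : ⟪g' (ℓ θ), b - a⟫ = ⟪g' b, b - a⟫ + ⟪g' (ℓ θ) - g' b, b - a⟫ := by
      rw [inner_sub_left]; ring
    have i1 : ⟪g' (ℓ θ) - g' b, b - a⟫ ≤ ‖g' (ℓ θ) - g' b‖ * ‖b - a‖ :=
      real_inner_le_norm _ _
    have i2 : ‖g' (ℓ θ) - g' b‖ ≤ β * ‖b - a‖ := by
      refine (hlip _ _).trans ?_
      have : ℓ θ - b = (1 - θ) • (a - b) := by
        simp only [hℓ]
        module
      rw [this, norm_smul]
      have h1 : ‖(1:ℝ) - θ‖ ≤ 1 := by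
        rw [Real.norm_eq_abs, abs_le]; constructor <;> [linarith [hθ.2]; linarith [hθ.1]]
      have h2 : ‖a - b‖ = ‖b - a‖ := norm_sub_rev a b
      rw [h2]
      calc β * (‖(1:ℝ) - θ‖ * ‖b - a‖) ≤ β * (1 * ‖b - a‖) := by
            gcongr
        _ = β * ‖b - a‖ := by ring
    nlinarith [norm_nonneg (b - a), norm_nonneg (g' (ℓ θ) - g' b)]
  calc (∫ θ in (0:ℝ)..1, ⟪g' (ℓ θ), b - a⟫) ≤ _ := hmono
    _ = ⟪g' b, b - a⟫ + β * ‖b - a‖^2 := by simp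

set_option maxHeartbeats 2000000 in
/-- Nonconvex setting: along the flow `ẋ(t) + x(t) = prox_{ηf}(x(t) − η∇g(x(t)))`
on `ℝⁿ` (encoded by the subdifferential characterization of the prox), with
`f` proper convex lsc, `∇g` β-Lipschitz (g possibly nonconvex), `f+g` bounded
below and `ηβ(3+ηβ) < 1`: `ẋ ∈ L²([0,∞))`, `ẋ(t) → 0`, and
`lim_{t→∞}(f+g)(ẋ(t)+x(t))` exists in `ℝ`. -/
theorem stmt14 (n : ℕ)
    (f : EuclideanSpace ℝ (Fin n) → ℝ)
    (hf_cvx : ConvexOn ℝ Set.univ f) (hf_lsc : LowerSemicontinuous f)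
    (g : EuclideanSpace ℝ (Fin n) → ℝ) (g' : EuclideanSpace ℝ (Fin n) → EuclideanSpace ℝ (Fin n))
    (hg_diff : ∀ z, HasGradientAt g (g' z) z)
    (β : ℝ) (hβ : 0 ≤ β)
    (hg_lip : ∀ a b, ‖g' a - g' b‖ ≤ β * ‖a - b‖)
    (hbd : ∃ m : ℝ, ∀ u, m ≤ f u + g u)
    (η : ℝ) (hη : 0 < η) (hstep : η * β * (3 + η * β) < 1)
    (x xd xdd : ℝ → EuclideanSpace ℝ (Fin n)) (x₀ : EuclideanSpace ℝ (Fin n))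
    (hx0 : x 0 = x₀)
    (hx : ∀ t ≥ (0:ℝ), HasDerivAt x (xd t) t) (hxd_cont : Continuous xd)
    (hprox : ∀ t ≥ (0:ℝ), ∀ y,
      f (xd t + x t) + ⟪-((1/η) • xd t) - g' (x t), y - (xd t + x t)⟫ ≤ f y)
    (hxdd : ∀ᵐ t ∂(volume.restrict (Ici (0:ℝ))),
      HasDerivAt xd (xdd t) t ∧ ‖xdd t‖ ≤ (2 + η * β) * ‖xd t‖)
    (hchain_f : ∀ᵐ t ∂(volume.restrict (Ici (0:ℝ))),
      HasDerivAt (fun s => f (xd s + x s))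
        ⟪-((1/η) • xd t) - g' (x t), xdd t + xd t⟫ t) :
    IntegrableOn (fun t => ‖xd t‖ ^ 2) (Ici 0) ∧
    Tendsto xd atTop (𝓝 0) ∧
    ∃ L : ℝ, Tendsto (fun t => f (xd t + x t) + g (xd t + x t)) atTop (𝓝 L) := by
  obtain ⟨m, hm⟩ := hbd
  set W : ℝ → ℝ := fun t => f (xd t + x t) + g (xd t + x t) + (1/(2*η)) * ‖xd t‖^2 with hWdef
  clear_value W
  have hηβ : (0:ℝ) ≤ η * β := mul_nonneg hη.le hβ
  have hη2 : (0:ℝ) < 1/(2*η) := by positivity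
  have hη1 : (0:ℝ) < 1/η := by positivity
  -- pointwise Lipschitz relation between xd and x
  have hLip : ∀ σ, 0 ≤ σ → ∀ τ, 0 ≤ τ → ‖xd τ - xd σ‖ ≤ (2 + η*β) * ‖x τ - x σ‖ := by
    intro σ hσ τ hτ
    set p := xd τ - xd σ with hp
    set q := x τ - x σ with hq
    have h1 := hprox τ hτ (xd σ + x σ)
    have h2 := hprox σ hσ (xd τ + x τ)
    have hd1 : (xd σ + x σ) - (xd τ + x τ) = -(p + q) := by rw [hp, hq]; abel
    have hd2 : (xd τ + x τ) - (xd σ + x σ) = p + q := by rw [hp, hq]; abel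
    rw [hd1, inner_neg_right] at h1
    rw [hd2] at h2
    have h3 : ⟪-((1/η) • xd σ) - g' (x σ), p + q⟫ - ⟪-((1/η) • xd τ) - g' (x τ), p + q⟫ ≤ 0 := by
      linarith
    have e2 : (-((1/η) • xd σ) - g' (x σ)) - (-((1/η) • xd τ) - g' (x τ))
        = (1/η) • p + (g' (x τ) - g' (x σ)) := by rw [hp]; module
    rw [← inner_sub_left, e2, inner_add_left, real_inner_smul_left] at h3
    have h5 : ⟪p, p + q⟫ = ‖p‖^2 + ⟪p, q⟫ := by
      rw [inner_add_right, real_inner_self_eq_norm_sq]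
    have h6 : -⟪g' (x τ) - g' (x σ), p + q⟫ ≤ (β * ‖q‖) * (‖p‖ + ‖q‖) := by
      have i1 : |⟪g' (x τ) - g' (x σ), p + q⟫| ≤ ‖g' (x τ) - g' (x σ)‖ * ‖p + q‖ :=
        abs_real_inner_le_norm _ _
      have i2 : ‖g' (x τ) - g' (x σ)‖ ≤ β * ‖q‖ := hg_lip (x τ) (x σ)
      have i3 : ‖p + q‖ ≤ ‖p‖ + ‖q‖ := norm_add_le p q
      have i4 : ‖g' (x τ) - g' (x σ)‖ * ‖p + q‖ ≤ (β * ‖q‖) * (‖p‖ + ‖q‖) :=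
        mul_le_mul i2 i3 (norm_nonneg _) (by positivity)
      nlinarith [neg_abs_le ⟪g' (x τ) - g' (x σ), p + q⟫]
    have h7 : -(‖p‖ * ‖q‖) ≤ ⟪p, q⟫ := by
      have := abs_real_inner_le_norm p q
      nlinarith [neg_abs_le ⟪p, q⟫]
    have hkey : ‖p‖^2 ≤ (1 + η*β) * ‖p‖ * ‖q‖ + (η*β) * ‖q‖^2 := by
      have h8 : (1/η) * (‖p‖^2 + ⟪p, q⟫) ≤ (β * ‖q‖) * (‖p‖ + ‖q‖) := by
        rw [← h5]; linarith
      have h9 : ‖p‖^2 + ⟪p, q⟫ ≤ (η*β)*‖q‖*‖p‖ + (η*β)*‖q‖^2 := by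
        have h10 := mul_le_mul_of_nonneg_left h8 hη.le
        rw [← mul_assoc, mul_one_div, div_self hη.ne', one_mul] at h10
        calc ‖p‖^2 + ⟪p, q⟫ ≤ η * ((β * ‖q‖) * (‖p‖ + ‖q‖)) := h10
          _ = (η*β)*‖q‖*‖p‖ + (η*β)*‖q‖^2 := by ring
      linarith [h7, h9]
    have := quad_aux (norm_nonneg p) (norm_nonneg q) hηβ hkey
    linarith
  -- mean value bound for x
  have hMVT : ∀ σ τ M, 0 ≤ σ → σ ≤ τ → (∀ r ∈ Icc σ τ, ‖xd r‖ ≤ M) →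
      ‖x τ - x σ‖ ≤ M * (τ - σ) := by
    intro σ τ M hσ hστ hb
    have := Convex.norm_image_sub_le_of_norm_hasDerivWithin_le
      (f := x) (f' := xd) (s := Icc σ τ)
      (fun r hr => (hx r (hσ.trans hr.1)).hasDerivWithinAt) hb (convex_Icc σ τ)
      (left_mem_Icc.2 hστ) (right_mem_Icc.2 hστ)
    calc ‖x τ - x σ‖ ≤ M * ‖τ - σ‖ := this
      _ = M * (τ - σ) := by rw [Real.norm_eq_abs, abs_of_nonneg (sub_nonneg.2 hστ)]
  have hIntSq2 : ∀ a b : ℝ, IntervalIntegrable (fun r => ‖xd r‖^2) volume a b :=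
    fun a b => (hxd_cont.norm.pow 2).intervalIntegrable a b
  -- KEY: energy decay inequality
  have hKEY : ∀ s, 0 ≤ s → ∀ t, s ≤ t →
      W t - W s ≤ (β*(3+η*β) - 1/η) * ∫ r in s..t, ‖xd r‖^2 := by
    intro s hs t hst
    -- bound on the velocity over [s,t]
    obtain ⟨M0, hM0⟩ := (isCompact_Icc (a := s) (b := t)).exists_bound_of_continuousOn
      (hxd_cont.continuousOn (s := Icc s t))
    set M : ℝ := max M0 0 with hMdef
    have hM : ∀ r ∈ Icc s t, ‖xd r‖ ≤ M := fun r hr => (hM0 r hr).trans (le_max_left _ _)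
    have hMnn : 0 ≤ M := le_max_right _ _
    set C : ℝ := (β*(3+η*β) + 1/η)*(2+η*β)*M^2 + β*(3+η*β)^2*M^2 with hCdef
    have hb1 : (0:ℝ) ≤ β*(3+η*β) := mul_nonneg hβ (by linarith)
    have hb2 : (0:ℝ) ≤ β*(3+η*β)^2 := mul_nonneg hβ (by positivity)
    have hC0 : 0 ≤ C := by
      rw [hCdef]
      have : (0:ℝ) ≤ (β*(3+η*β) + 1/η)*(2+η*β) :=
        mul_nonneg (by linarith) (by linarith)
      positivity
    -- one-step estimate
    have hstep1 : ∀ σ τ δ, s ≤ σ → σ ≤ τ → τ ≤ t → τ - σ ≤ δ → 0 ≤ δ →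
        W τ - W σ ≤ (β*(3+η*β) - 1/η) * (∫ r in σ..τ, ‖xd r‖^2) + C*δ*(τ-σ) := by
      intro σ τ δ hsσ hστ hτt hτσδ hδ
      have hσ0 : 0 ≤ σ := hs.trans hsσ
      have hτ0 : 0 ≤ τ := hσ0.trans hστ
      have hsub : Icc σ τ ⊆ Icc s t := Icc_subset_Icc hsσ hτt
      have hMloc : ∀ r ∈ Icc σ τ, ‖xd r‖ ≤ M := fun r hr => hM r (hsub hr)
      have hfar : ∀ r ∈ Icc σ τ, ‖xd τ - xd r‖ ≤ (2+η*β)*(M*δ) := by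
        intro r hr
        refine (hLip r (hσ0.trans hr.1) τ hτ0).trans ?_
        have h1 : ‖x τ - x r‖ ≤ M * (τ - r) :=
          hMVT r τ M (hσ0.trans hr.1) hr.2 (fun r' hr' => hMloc r' ⟨hr.1.trans hr'.1, hr'.2⟩)
        have h2 : M * (τ - r) ≤ M * δ := by
          have : τ - r ≤ δ := by linarith [hr.1]
          exact mul_le_mul_of_nonneg_left this hMnn
        exact mul_le_mul_of_nonneg_left (h1.trans h2) (by linarith)
      set p := xd τ - xd σ with hpdef
      set q := x τ - x σ with hqdef
      set w := (xd τ + x τ) - (xd σ + x σ) with hwdef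
      have hwpq : w = p + q := by rw [hwdef, hpdef, hqdef]; abel
      have hq1 : ‖q‖ ≤ M*(τ-σ) := hMVT σ τ M hσ0 hστ hMloc
      have hqnn : (0:ℝ) ≤ ‖q‖ := norm_nonneg q
      -- (★): discrete energy inequality
      have hstar : W τ - W σ ≤ β*(3+η*β)*(‖xd τ‖*‖q‖) + β*(3+η*β)^2*‖q‖^2
          - (1/η)*⟪xd τ, q⟫ := by
        have hA : f (xd τ + x τ) - f (xd σ + x σ) ≤ ⟪-((1/η) • xd τ) - g' (x τ), w⟫ := by
          have h1 := hprox τ hτ0 (xd σ + x σ)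
          have e : (xd σ + x σ) - (xd τ + x τ) = -w := by rw [hwdef]; abel
          rw [e, inner_neg_right] at h1
          linarith
        have hB : g (xd τ + x τ) - g (xd σ + x σ) ≤ ⟪g' (xd τ + x τ), w⟫ + β*‖w‖^2 :=
          descent_aux g g' hg_diff β hβ hg_lip (xd σ + x σ) (xd τ + x τ)
        have hC2 : ‖xd τ‖^2 - ‖xd σ‖^2 ≤ 2*⟪xd τ, p⟫ := by
          have e1 : ⟪xd τ, p⟫ = ‖xd τ‖^2 - ⟪xd τ, xd σ⟫ := by
            rw [hpdef, inner_sub_right, real_inner_self_eq_norm_sq]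
          nlinarith [norm_sub_sq_real (xd τ) (xd σ), sq_nonneg ‖xd τ - xd σ‖,
            sq_nonneg (‖xd τ‖ - ‖xd σ‖), norm_sub_sq_real (xd τ) (xd σ)]
        have hC3 : (1/(2*η))*(‖xd τ‖^2 - ‖xd σ‖^2) ≤ (1/η)*⟪xd τ, p⟫ := by
          have h1 := mul_le_mul_of_nonneg_left hC2 hη2.le
          have e : (1/(2*η)) * (2*⟪xd τ, p⟫) = (1/η)*⟪xd τ, p⟫ := by
            field_simp
          linarith
        have e1 : ⟪-((1/η) • xd τ) - g' (x τ), w⟫ + ⟪g' (xd τ + x τ), w⟫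
            = ⟪g' (xd τ + x τ) - g' (x τ), w⟫ - (1/η)*⟪xd τ, p⟫ - (1/η)*⟪xd τ, q⟫ := by
          rw [hwpq, inner_sub_left, inner_sub_left, inner_neg_left, real_inner_smul_left,
            inner_add_right, inner_add_right, inner_add_right]
          ring
        have i1 : ⟪g' (xd τ + x τ) - g' (x τ), w⟫ ≤ β*(‖xd τ‖*‖w‖) := by
          have j1 : ⟪g' (xd τ + x τ) - g' (x τ), w⟫ ≤ ‖g' (xd τ + x τ) - g' (x τ)‖ * ‖w‖ :=
            real_inner_le_norm _ _
          have j2 : ‖g' (xd τ + x τ) - g' (x τ)‖ ≤ β * ‖xd τ‖ := by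
            have := hg_lip (xd τ + x τ) (x τ)
            simpa using this
          calc ⟪g' (xd τ + x τ) - g' (x τ), w⟫ ≤ ‖g' (xd τ + x τ) - g' (x τ)‖ * ‖w‖ := j1
            _ ≤ (β * ‖xd τ‖) * ‖w‖ := mul_le_mul_of_nonneg_right j2 (norm_nonneg w)
            _ = β*(‖xd τ‖*‖w‖) := by ring
        have i2 : ‖w‖ ≤ (3+η*β)*‖q‖ := by
          have j1 : ‖p‖ ≤ (2+η*β)*‖q‖ := hLip σ hσ0 τ hτ0
          calc ‖w‖ = ‖p + q‖ := by rw [hwpq]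
            _ ≤ ‖p‖ + ‖q‖ := norm_add_le p q
            _ ≤ (2+η*β)*‖q‖ + ‖q‖ := by linarith
            _ = (3+η*β)*‖q‖ := by ring
        have j1 : β*(‖xd τ‖*‖w‖) ≤ β*(3+η*β)*(‖xd τ‖*‖q‖) := by
          have : ‖xd τ‖*‖w‖ ≤ ‖xd τ‖*((3+η*β)*‖q‖) :=
            mul_le_mul_of_nonneg_left i2 (norm_nonneg _)
          calc β*(‖xd τ‖*‖w‖) ≤ β*(‖xd τ‖*((3+η*β)*‖q‖)) :=
                mul_le_mul_of_nonneg_left this hβ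
            _ = β*(3+η*β)*(‖xd τ‖*‖q‖) := by ring
        have j2 : β*‖w‖^2 ≤ β*(3+η*β)^2*‖q‖^2 := by
          have h1 : ‖w‖^2 ≤ ((3+η*β)*‖q‖)^2 := by
            have := pow_le_pow_left₀ (norm_nonneg w) i2 2
            exact this
          calc β*‖w‖^2 ≤ β*(((3+η*β)*‖q‖)^2) := mul_le_mul_of_nonneg_left h1 hβ
            _ = β*(3+η*β)^2*‖q‖^2 := by ring
        have hWW : W τ - W σ = (f (xd τ + x τ) - f (xd σ + x σ))
            + (g (xd τ + x τ) - g (xd σ + x σ)) + (1/(2*η))*(‖xd τ‖^2 - ‖xd σ‖^2) := by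
          rw [hWdef]; ring
        rw [hWW]
        linarith [hA, hB, hC3, e1, i1, j1, j2]
      -- integral comparisons
      have hIntSq : IntervalIntegrable (fun r => ‖xd r‖^2) volume σ τ :=
        ((hxd_cont.norm.pow 2).intervalIntegrable σ τ)
      have hFTC : ∫ r in σ..τ, xd r = x τ - x σ := by
        refine integral_eq_sub_of_hasDerivAt (fun r hr => ?_) (hxd_cont.intervalIntegrable σ τ)
        rw [uIcc_of_le hστ] at hr
        exact hx r (hσ0.trans hr.1)
      have hinner : ⟪xd τ, q⟫ = ∫ r in σ..τ, ⟪xd τ, xd r⟫ := by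
        calc ⟪xd τ, q⟫ = (innerSL ℝ (xd τ)) (∫ r in σ..τ, xd r) := by
              rw [hFTC]; rfl
          _ = ∫ r in σ..τ, (innerSL ℝ (xd τ)) (xd r) :=
              (ContinuousLinearMap.intervalIntegral_comp_comm _
                (hxd_cont.intervalIntegrable σ τ)).symm
          _ = ∫ r in σ..τ, ⟪xd τ, xd r⟫ := rfl
      have hinncont : Continuous fun r => ⟪xd τ, xd r⟫ := continuous_const.inner hxd_cont
      have hlow : (∫ r in σ..τ, ‖xd r‖^2) - ((2+η*β)*(M*δ)*M)*(τ-σ) ≤ ⟪xd τ, q⟫ := by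
        rw [hinner]
        have h1 : ∫ r in σ..τ, (‖xd r‖^2 - (2+η*β)*(M*δ)*M) ≤ ∫ r in σ..τ, ⟪xd τ, xd r⟫ := by
          refine integral_mono_on hστ (hIntSq.sub (intervalIntegrable_const))
            (hinncont.intervalIntegrable σ τ) (fun r hr => ?_)
          have e1 : ⟪xd τ, xd r⟫ = ‖xd r‖^2 + ⟪xd τ - xd r, xd r⟫ := by
            rw [inner_sub_left, real_inner_self_eq_norm_sq]; ring
          have i1 : -(‖xd τ - xd r‖ * ‖xd r‖) ≤ ⟪xd τ - xd r, xd r⟫ := by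
            have := abs_real_inner_le_norm (xd τ - xd r) (xd r)
            nlinarith [neg_abs_le ⟪xd τ - xd r, xd r⟫]
          have i2 : ‖xd τ - xd r‖ * ‖xd r‖ ≤ ((2+η*β)*(M*δ))*M :=
            mul_le_mul (hfar r hr) (hMloc r hr) (norm_nonneg _)
              (by positivity)
          nlinarith
        have h2 : ∫ r in σ..τ, (‖xd r‖^2 - (2+η*β)*(M*δ)*M)
            = (∫ r in σ..τ, ‖xd r‖^2) - ((2+η*β)*(M*δ)*M)*(τ-σ) := by
          rw [intervalIntegral.integral_sub hIntSq intervalIntegrable_const,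
            intervalIntegral.integral_const]
          simp [smul_eq_mul]
          ring
        linarith
      have hub : ‖xd τ‖ * ‖q‖ ≤ (∫ r in σ..τ, ‖xd r‖^2) + ((2+η*β)*(M*δ)*M)*(τ-σ) := by
        have k1 : ‖q‖ ≤ ∫ r in σ..τ, ‖xd r‖ := by
          rw [hqdef, ← hFTC]
          exact intervalIntegral.norm_integral_le_integral_norm hστ
        have k2 : ‖xd τ‖ * ‖q‖ ≤ ∫ r in σ..τ, ‖xd τ‖ * ‖xd r‖ := by
          rw [intervalIntegral.integral_const_mul]
          exact mul_le_mul_of_nonneg_left k1 (norm_nonneg _)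
        have k3 : ∫ r in σ..τ, ‖xd τ‖ * ‖xd r‖
            ≤ ∫ r in σ..τ, (‖xd r‖^2 + (2+η*β)*(M*δ)*M) := by
          refine integral_mono_on hστ ((continuous_const.mul hxd_cont.norm).intervalIntegrable σ τ)
            (hIntSq.add intervalIntegrable_const) (fun r hr => ?_)
          have i1 : ‖xd τ‖ ≤ ‖xd r‖ + (2+η*β)*(M*δ) := by
            have := norm_sub_norm_le (xd τ) (xd r)
            linarith [hfar r hr]
          have knn : (0:ℝ) ≤ (2+η*β)*(M*δ) :=
            mul_nonneg (by linarith) (mul_nonneg hMnn hδ)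
          have i2 : ‖xd τ‖*‖xd r‖ ≤ (‖xd r‖ + (2+η*β)*(M*δ))*‖xd r‖ :=
            mul_le_mul_of_nonneg_right i1 (norm_nonneg _)
          have i3 : (2+η*β)*(M*δ)*‖xd r‖ ≤ (2+η*β)*(M*δ)*M :=
            mul_le_mul_of_nonneg_left (hMloc r hr) knn
          nlinarith [i2, i3]
        have k4 : ∫ r in σ..τ, (‖xd r‖^2 + (2+η*β)*(M*δ)*M)
            = (∫ r in σ..τ, ‖xd r‖^2) + ((2+η*β)*(M*δ)*M)*(τ-σ) := by
          rw [intervalIntegral.integral_add hIntSq intervalIntegrable_const,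
            intervalIntegral.integral_const]
          simp [smul_eq_mul]
          ring
        linarith
      have hq2 : ‖q‖^2 ≤ M^2*δ*(τ-σ) := by
        have u1 : ‖q‖*‖q‖ ≤ (M*(τ-σ))*(M*(τ-σ)) := mul_self_le_mul_self hqnn hq1
        have u2 : M^2*(τ-σ)*(τ-σ) ≤ M^2*(τ-σ)*δ :=
          mul_le_mul_of_nonneg_left hτσδ
            (mul_nonneg (sq_nonneg M) (sub_nonneg.2 hστ))
        nlinarith [u1, u2]
      -- combine
      have m1 : β*(3+η*β)*(‖xd τ‖*‖q‖)
          ≤ β*(3+η*β)*((∫ r in σ..τ, ‖xd r‖^2) + ((2+η*β)*(M*δ)*M)*(τ-σ)) :=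
        mul_le_mul_of_nonneg_left hub hb1
      have m2 : β*(3+η*β)^2*‖q‖^2 ≤ β*(3+η*β)^2*(M^2*δ*(τ-σ)) :=
        mul_le_mul_of_nonneg_left hq2 hb2
      have m3 : -((1/η)*⟪xd τ, q⟫)
          ≤ -((1/η)*((∫ r in σ..τ, ‖xd r‖^2) - ((2+η*β)*(M*δ)*M)*(τ-σ))) :=
        neg_le_neg (mul_le_mul_of_nonneg_left hlow hη1.le)
      have heq : β*(3+η*β)*((∫ r in σ..τ, ‖xd r‖^2) + ((2+η*β)*(M*δ)*M)*(τ-σ))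
          + β*(3+η*β)^2*(M^2*δ*(τ-σ))
          - (1/η)*((∫ r in σ..τ, ‖xd r‖^2) - ((2+η*β)*(M*δ)*M)*(τ-σ))
          = (β*(3+η*β) - 1/η) * (∫ r in σ..τ, ‖xd r‖^2) + C*δ*(τ-σ) := by
        rw [hCdef]; ring
      linarith [hstar, m1, m2, m3]
    -- uniform partitions
    have hN : ∀ N : ℕ, W t - W s ≤ (β*(3+η*β) - 1/η) * (∫ r in s..t, ‖xd r‖^2)
        + C*((t-s)/(N+1))*(t-s) := by
      intro N
      set δ : ℝ := (t-s)/(N+1) with hδdef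
      have hNpos : (0:ℝ) < (N:ℝ)+1 := by positivity
      have hδ0 : 0 ≤ δ := by
        rw [hδdef]; exact div_nonneg (by linarith) hNpos.le
      set a : ℕ → ℝ := fun i => s + i*δ with hadef
      have ha0 : a 0 = s := by simp [hadef]
      have haN : a (N+1) = t := by
        rw [hadef, hδdef]; push_cast; field_simp; ring
      have hstep2 : ∀ i : ℕ, a (i+1) - a i = δ := by
        intro i; simp only [hadef]; push_cast; ring
      have hmono : ∀ i j : ℕ, i ≤ j → a i ≤ a j := by
        intro i j hij
        simp only [hadef]
        have hcast : (i:ℝ) ≤ j := by exact_mod_cast hij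
        nlinarith [hδ0]
      have hin : ∀ i : ℕ, i ≤ N+1 → a i ≤ t := by
        intro i hi; rw [← haN]; exact hmono i (N+1) hi
      have hsle : ∀ i : ℕ, s ≤ a i := by
        intro i; rw [← ha0]; exact hmono 0 i (Nat.zero_le i)
      have hsum1 : ∑ i ∈ Finset.range (N+1), (W (a (i+1)) - W (a i)) = W t - W s := by
        rw [Finset.sum_range_sub (fun i => W (a i)) (N+1), ha0, haN]
      have hsum2 : ∑ i ∈ Finset.range (N+1), (∫ r in (a i)..(a (i+1)), ‖xd r‖^2)
          = ∫ r in s..t, ‖xd r‖^2 := by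
        rw [intervalIntegral.sum_integral_adjacent_intervals (fun k _ => hIntSq2 _ _), ha0, haN]
      have hle : ∀ i ∈ Finset.range (N+1), W (a (i+1)) - W (a i)
          ≤ (β*(3+η*β) - 1/η) * (∫ r in (a i)..(a (i+1)), ‖xd r‖^2) + C*δ*δ := by
        intro i hi
        have hiN : i + 1 ≤ N+1 := Finset.mem_range.1 hi
        have h := hstep1 (a i) (a (i+1)) δ (hsle i)
          (by nlinarith [hstep2 i, hδ0] : a i ≤ a (i+1)) (hin (i+1) hiN)
          (le_of_eq (hstep2 i)) hδ0
        rw [hstep2 i] at h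
        exact h
      have hsum3 := Finset.sum_le_sum hle
      rw [hsum1] at hsum3
      have hsum4 : ∑ i ∈ Finset.range (N+1),
          ((β*(3+η*β) - 1/η) * (∫ r in (a i)..(a (i+1)), ‖xd r‖^2) + C*δ*δ)
          = (β*(3+η*β) - 1/η) * (∫ r in s..t, ‖xd r‖^2) + ((N:ℝ)+1)*(C*δ*δ) := by
        rw [Finset.sum_add_distrib, ← Finset.mul_sum, hsum2, Finset.sum_const,
          Finset.card_range, nsmul_eq_mul]
        push_cast; ring
      have hNδ : ((N:ℝ)+1)*δ = t - s := by rw [hδdef]; field_simp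
      have heq2 : ((N:ℝ)+1)*(C*δ*δ) = C*δ*(t-s) := by rw [← hNδ]; ring
      rw [hsum4, heq2] at hsum3
      exact hsum3
    have hlim : Tendsto (fun N : ℕ => C*((t-s)/((N:ℝ)+1))*(t-s)) atTop (𝓝 0) := by
      have h1 : Tendsto (fun N : ℕ => (1:ℝ)/((N:ℝ)+1)) atTop (𝓝 0) :=
        tendsto_one_div_add_atTop_nhds_zero_nat
      have h2 := h1.const_mul (C*(t-s)*(t-s))
      rw [mul_zero] at h2
      refine h2.congr (fun N => ?_)
      field_simp
    have hfin : ∀ N : ℕ, W t - W s - (β*(3+η*β) - 1/η) * (∫ r in s..t, ‖xd r‖^2)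
        ≤ C*((t-s)/((N:ℝ)+1))*(t-s) := fun N => by linarith [hN N]
    have := ge_of_tendsto' hlim hfin
    linarith
  -- consequences of the key inequality
  have hco : β*(3+η*β) - 1/η < 0 := by
    have h1 : η*(β*(3+η*β)) < 1 := by
      calc η*(β*(3+η*β)) = η*β*(3+η*β) := by ring
        _ < 1 := hstep
    have h2 : β*(3+η*β) < 1/η := by
      rw [lt_div_iff₀ hη]
      linarith [mul_comm (β*(3+η*β)) η]
    linarith
  have hWle : ∀ t, 0 ≤ t → W t ≤ W 0 := by
    intro t ht
    have h := hKEY 0 le_rfl t ht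
    have hI : 0 ≤ ∫ r in (0:ℝ)..t, ‖xd r‖^2 :=
      intervalIntegral.integral_nonneg ht (fun r _ => sq_nonneg _)
    nlinarith [mul_nonpos_of_nonpos_of_nonneg hco.le hI]
  have hWm : ∀ t, m + (1/(2*η))*‖xd t‖^2 ≤ W t := by
    intro t
    have := hm (xd t + x t)
    simp only [hWdef]
    linarith
  have hsqnn : ∀ t : ℝ, (0:ℝ) ≤ (1/(2*η))*‖xd t‖^2 :=
    fun t => mul_nonneg hη2.le (sq_nonneg _)
  have hIbound : ∀ T, 0 ≤ T → ∫ r in (0:ℝ)..T, ‖xd r‖^2 ≤ (W 0 - m)/(1/η - β*(3+η*β)) := by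
    intro T hT
    have h := hKEY 0 le_rfl T hT
    rw [le_div_iff₀ (by linarith : (0:ℝ) < 1/η - β*(3+η*β))]
    nlinarith [hWm T, hsqnn T]
  -- Goal 1 : integrability
  have goal1 : IntegrableOn (fun t => ‖xd t‖ ^ 2) (Ici 0) := by
    rw [integrableOn_Ici_iff_integrableOn_Ioi]
    refine integrableOn_Ioi_of_intervalIntegral_norm_bounded
      ((W 0 - m)/(1/η - β*(3+η*β))) 0 (fun i : ℕ => ?_) tendsto_natCast_atTop_atTop ?_
    · exact (hxd_cont.norm.pow 2).integrableOn_Ioc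
    · refine Eventually.of_forall fun i => ?_
      have e : (fun r : ℝ => ‖(‖xd r‖^2)‖) = fun r => ‖xd r‖^2 :=
        funext fun r => by rw [Real.norm_eq_abs, abs_of_nonneg (sq_nonneg _)]
      rw [e]
      exact hIbound i (Nat.cast_nonneg i)
  -- uniform bound on the velocity
  have hB2 : ∀ t, 0 ≤ t → ‖xd t‖^2 ≤ 2*η*(W 0 - m) := by
    intro t ht
    have h1 := hWle t ht
    have h2 := hWm t
    have h3 : (1/(2*η))*‖xd t‖^2 ≤ W 0 - m := by linarith
    have h4 := mul_le_mul_of_nonneg_left h3 (by positivity : (0:ℝ) ≤ 2*η)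
    have e : (2*η)*((1/(2*η))*‖xd t‖^2) = ‖xd t‖^2 := by field_simp
    rw [e] at h4
    exact h4
  have hM₀ : ∀ t, 0 ≤ t → ‖xd t‖ ≤ Real.sqrt (2*η*(W 0 - m)) := by
    intro t ht
    rw [← Real.sqrt_sq (norm_nonneg (xd t))]
    exact Real.sqrt_le_sqrt (hB2 t ht)
  set M₀ : ℝ := Real.sqrt (2*η*(W 0 - m)) with hM₀def
  have hM₀0 : 0 ≤ M₀ := Real.sqrt_nonneg _
  set K : ℝ := 2*(2+η*β)*M₀^2 + 1 with hKdef
  have hK0 : (0:ℝ) < K := by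
    have h1 : (0:ℝ) ≤ 2*(2+η*β)*M₀^2 := mul_nonneg (by linarith) (sq_nonneg _)
    rw [hKdef]; linarith
  -- global Lipschitz bound for the squared speed
  have hLips : ∀ σ τ, 0 ≤ σ → σ ≤ τ → |‖xd τ‖^2 - ‖xd σ‖^2| ≤ K*(τ-σ) := by
    intro σ τ hσ hστ
    have h1 : ‖xd τ - xd σ‖ ≤ (2+η*β)*(M₀*(τ-σ)) :=
      (hLip σ hσ τ (hσ.trans hστ)).trans (mul_le_mul_of_nonneg_left
        (hMVT σ τ M₀ hσ hστ (fun r hr => hM₀ r (hσ.trans hr.1))) (by linarith))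
    have h2 : |‖xd τ‖ - ‖xd σ‖| ≤ ‖xd τ - xd σ‖ := abs_norm_sub_norm_le _ _
    have h3 : |‖xd τ‖^2 - ‖xd σ‖^2| = (‖xd τ‖ + ‖xd σ‖) * |‖xd τ‖ - ‖xd σ‖| := by
      rw [← abs_of_nonneg (add_nonneg (norm_nonneg (xd τ)) (norm_nonneg (xd σ))), ← abs_mul]
      congr 1
      ring
    rw [h3]
    calc (‖xd τ‖ + ‖xd σ‖) * |‖xd τ‖ - ‖xd σ‖|
        ≤ (M₀ + M₀) * ((2+η*β)*(M₀*(τ-σ))) :=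
          mul_le_mul (add_le_add (hM₀ τ (hσ.trans hστ)) (hM₀ σ hσ))
            (h2.trans h1) (abs_nonneg _) (by linarith)
      _ = 2*(2+η*β)*M₀^2*(τ-σ) := by ring
      _ ≤ K*(τ-σ) := mul_le_mul_of_nonneg_right (by rw [hKdef]; linarith)
          (sub_nonneg.2 hστ)
  have hIoiInt : ∀ t, 0 ≤ t → IntegrableOn (fun r => ‖xd r‖^2) (Ioi t) := by
    intro t ht
    exact goal1.mono_set (fun r hr => le_trans ht (le_of_lt hr))
  -- tail estimate
  have htail : ∀ t, 0 ≤ t → (‖xd t‖^2)^2 ≤ 2*K*∫ r in Ioi t, ‖xd r‖^2 := by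
    intro t ht
    set d : ℝ := ‖xd t‖^2 / K with hddef
    have hd0 : 0 ≤ d := div_nonneg (sq_nonneg _) hK0.le
    have h1 : ∫ r in t..(t+d), (‖xd t‖^2 - K*(r-t)) ≤ ∫ r in t..(t+d), ‖xd r‖^2 := by
      have hcont1 : Continuous (fun r : ℝ => ‖xd t‖^2 - K*(r-t)) := by fun_prop
      refine integral_mono_on (by linarith) (hcont1.intervalIntegrable _ _)
        (hIntSq2 _ _) (fun r hr => ?_)
      have := abs_le.1 (hLips t r ht hr.1)
      linarith [this.1]
    have e1 : ∫ r in t..(t+d), (r - t) = d^2/2 := by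
      have h := intervalIntegral.integral_comp_sub_right (a := t) (b := t+d) (fun r => r) t
      simp only [add_sub_cancel_left, sub_self] at h
      rw [h, integral_id]
      ring
    have h2 : ∫ r in t..(t+d), (‖xd t‖^2 - K*(r-t)) = d*‖xd t‖^2 - K*d^2/2 := by
      have hcont2 : Continuous (fun r : ℝ => K*(r-t)) := by fun_prop
      rw [intervalIntegral.integral_sub (intervalIntegrable_const)
        (hcont2.intervalIntegrable _ _),
        intervalIntegral.integral_const_mul, e1, intervalIntegral.integral_const]
      simp [smul_eq_mul]
      ring
    have h3 : ∫ r in t..(t+d), ‖xd r‖^2 ≤ ∫ r in Ioi t, ‖xd r‖^2 := by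
      rw [intervalIntegral.integral_of_le (by linarith)]
      refine setIntegral_mono_set (hIoiInt t ht)
        (Eventually.of_forall (fun r => sq_nonneg _))
        (HasSubset.Subset.eventuallyLE Ioc_subset_Ioi_self)
    have e2 : d*‖xd t‖^2 - K*d^2/2 = (‖xd t‖^2)^2/(2*K) := by
      rw [hddef]; field_simp; ring
    have h4 : (‖xd t‖^2)^2/(2*K) ≤ ∫ r in Ioi t, ‖xd r‖^2 := by
      rw [← e2, ← h2]; linarith
    rw [div_le_iff₀ (by positivity : (0:ℝ) < 2*K)] at h4
    linarith
  have htail0 : Tendsto (fun t => ∫ r in Ioi t, ‖xd r‖^2) atTop (𝓝 0) := by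
    have hIoi0 := hIoiInt 0 le_rfl
    have h1 : Tendsto (fun t : ℝ => ∫ r in (0:ℝ)..t, ‖xd r‖^2) atTop
        (𝓝 (∫ r in Ioi 0, ‖xd r‖^2)) :=
      intervalIntegral_tendsto_integral_Ioi 0 hIoi0 tendsto_id
    have h2 : ∀ᶠ t in atTop, (∫ r in Ioi 0, ‖xd r‖^2) - (∫ r in (0:ℝ)..t, ‖xd r‖^2)
        = ∫ r in Ioi t, ‖xd r‖^2 := by
      filter_upwards [eventually_ge_atTop (0:ℝ)] with t ht
      have hu : Ioc 0 t ∪ Ioi t = Ioi 0 := Ioc_union_Ioi_eq_Ioi ht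
      have hdisj : Disjoint (Ioc (0:ℝ) t) (Ioi t) := Ioc_disjoint_Ioi le_rfl
      have hadd := setIntegral_union hdisj measurableSet_Ioi
        (hIoi0.mono_set Ioc_subset_Ioi_self) (hIoiInt t ht)
        (f := fun r => ‖xd r‖^2) (μ := volume)
      rw [hu] at hadd
      rw [intervalIntegral.integral_of_le ht, hadd]
      ring
    have h3 : Tendsto (fun t : ℝ => (∫ r in Ioi 0, ‖xd r‖^2) - (∫ r in (0:ℝ)..t, ‖xd r‖^2))
        atTop (𝓝 0) := by
      have := tendsto_const_nhds (α := ℝ) (f := atTop (α := ℝ))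
        (x := ∫ r in Ioi 0, ‖xd r‖^2) |>.sub h1
      simpa using this
    exact h3.congr' h2
  have hsq0 : Tendsto (fun t => ‖xd t‖^2) atTop (𝓝 0) := by
    have h1 : Tendsto (fun t => 2*K*∫ r in Ioi t, ‖xd r‖^2) atTop (𝓝 0) := by
      simpa using htail0.const_mul (2*K)
    have h2 : Tendsto (fun t => Real.sqrt (2*K*∫ r in Ioi t, ‖xd r‖^2)) atTop (𝓝 0) := by
      have := (Real.continuous_sqrt.tendsto' 0 0 Real.sqrt_zero).comp h1
      exact this
    refine squeeze_zero' (Eventually.of_forall fun t => sq_nonneg _) ?_ h2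
    filter_upwards [eventually_ge_atTop (0:ℝ)] with t ht
    have h3 := htail t ht
    calc ‖xd t‖^2 = Real.sqrt ((‖xd t‖^2)^2) := (Real.sqrt_sq (sq_nonneg _)).symm
      _ ≤ Real.sqrt (2*K*∫ r in Ioi t, ‖xd r‖^2) := Real.sqrt_le_sqrt h3
  have goal2 : Tendsto xd atTop (𝓝 0) := by
    rw [tendsto_zero_iff_norm_tendsto_zero]
    have := (Real.continuous_sqrt.tendsto' 0 0 Real.sqrt_zero).comp hsq0
    exact this.congr fun t => Real.sqrt_sq (norm_nonneg _)
  -- Goal 3 : convergence of the objective values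
  have hanti : Antitone (fun t => W (max t 0)) := by
    intro s' t' hst'
    have h := hKEY (max s' 0) (le_max_right _ _) (max t' 0) (max_le_max hst' le_rfl)
    have hI : 0 ≤ ∫ r in (max s' 0)..(max t' 0), ‖xd r‖^2 :=
      intervalIntegral.integral_nonneg (max_le_max hst' le_rfl) fun r _ => sq_nonneg _
    have h2 : (β*(3+η*β) - 1/η) * ∫ r in (max s' 0)..(max t' 0), ‖xd r‖^2 ≤ 0 :=
      mul_nonpos_of_nonpos_of_nonneg hco.le hI
    dsimp only
    linarith
  have hbdd : BddBelow (Set.range fun t => W (max t 0)) := by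
    refine ⟨m, ?_⟩
    rintro _ ⟨t, rfl⟩
    have h1 := hWm (max t 0)
    have h2 := hsqnn (max t 0)
    dsimp only
    linarith
  have hWtend : Tendsto (fun t => W (max t 0)) atTop (𝓝 (⨅ t : ℝ, W (max t 0))) :=
    tendsto_atTop_ciInf hanti hbdd
  have hWtend2 : Tendsto W atTop (𝓝 (⨅ t : ℝ, W (max t 0))) := by
    refine hWtend.congr' ?_
    filter_upwards [eventually_ge_atTop (0:ℝ)] with t ht
    rw [max_eq_left ht]
  refine ⟨goal1, goal2, ⟨(⨅ t : ℝ, W (max t 0)), ?_⟩⟩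
  have h1 : Tendsto (fun t => W t - (1/(2*η))*‖xd t‖^2) atTop
      (𝓝 ((⨅ t : ℝ, W (max t 0)) - (1/(2*η))*0)) :=
    hWtend2.sub (hsq0.const_mul (1/(2*η)))
  rw [mul_zero, sub_zero] at h1
  exact h1.congr fun t => by simp only [hWdef]; ring
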